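/- arXiv:2507.17513 — 4 statements merged into one kernel-verified Lean document; each statement's English description precedes it below -/
import Mathlib

section
/- Let U : ℝ^d → ℝ be continuous and let s : ℝ × ℝ^d → ℝ be continuously differentiable and solve the deterministic Hamilton–Jacobi–Bellman equation ∂_t s(t,x) = ½‖∇_x s(t,x)‖² − U(x) for all t ∈ [0,1] and x ∈ ℝ^d. Then for all 0 ≤ t₀ ≤ t₁ ≤ 1 and every continuously differentiable path x : [t₀, t₁] → ℝ^d, ∫_{t₀}^{t₁} ( ½‖x'(t)‖² + U(x(t)) ) dt ≥ s(t₀, x(t₀)) − s(t₁, x(t₁)). -/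
open MeasureTheory

/-- Verification lower bound: if `s` is `C¹` and solves the deterministic HJB equation
`∂_t s(t,x) = ½‖∇_x s(t,x)‖² − U(x)` on `[0,1] × ℝ^d`, then for all
`0 ≤ t₀ ≤ t₁ ≤ 1` and every `C¹` path `x : [t₀,t₁] → ℝ^d`,
`∫_{t₀}^{t₁} (½‖x'(t)‖² + U(x(t))) dt ≥ s(t₀, x(t₀)) − s(t₁, x(t₁))`. -/
theorem hjb_verification_lower_bound
    (d : ℕ) (hd : 1 ≤ d)
    (U : EuclideanSpace ℝ (Fin d) → ℝ) (hU : Continuous U)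
    (s : ℝ → EuclideanSpace ℝ (Fin d) → ℝ)
    (hs : ContDiff ℝ 1 (fun q : ℝ × EuclideanSpace ℝ (Fin d) => s q.1 q.2))
    (hHJB : ∀ t ∈ Set.Icc (0 : ℝ) 1, ∀ x : EuclideanSpace ℝ (Fin d),
      deriv (fun τ => s τ x) t = 1 / 2 * ‖gradient (s t) x‖ ^ 2 - U x)
    (t₀ t₁ : ℝ) (ht₀ : 0 ≤ t₀) (ht : t₀ ≤ t₁) (ht₁ : t₁ ≤ 1)
    (x x' : ℝ → EuclideanSpace ℝ (Fin d))
    (hx : ∀ t ∈ Set.Icc t₀ t₁, HasDerivAt x (x' t) t)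
    (hx' : ContinuousOn x' (Set.Icc t₀ t₁)) :
    (∫ t in t₀..t₁, (1 / 2 * ‖x' t‖ ^ 2 + U (x t))) ≥ s t₀ (x t₀) - s t₁ (x t₁) := by
  have hdiff : Differentiable ℝ (fun q : ℝ × EuclideanSpace ℝ (Fin d) => s q.1 q.2) :=
    hs.differentiable one_ne_zero
  let F : ℝ × EuclideanSpace ℝ (Fin d) → ℝ := fun q => s q.1 q.2
  let L : ℝ → EuclideanSpace ℝ (Fin d) → (ℝ × EuclideanSpace ℝ (Fin d) →L[ℝ] ℝ) :=
    fun t y => fderiv ℝ F (t, y)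
  -- time partial derivative
  have hderiv_t : ∀ (t : ℝ) (y : EuclideanSpace ℝ (Fin d)),
      HasDerivAt (fun τ => s τ y) (L t y (1, 0)) t := by
    intro t y
    have h1 : HasDerivAt (fun τ : ℝ => (τ, y)) ((1 : ℝ), (0 : EuclideanSpace ℝ (Fin d))) t :=
      (hasDerivAt_id t).prodMk (hasDerivAt_const t y)
    exact (hdiff (t, y)).hasFDerivAt.comp_hasDerivAt t h1
  -- gradient pairing
  have hgrad : ∀ (t : ℝ) (y v : EuclideanSpace ℝ (Fin d)),
      (inner ℝ (gradient (s t) y) v : ℝ) = L t y (0, v) := by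
    intro t y v
    have h1 : HasFDerivAt (fun z : EuclideanSpace ℝ (Fin d) => (t, z))
        ((0 : EuclideanSpace ℝ (Fin d) →L[ℝ] ℝ).prod (ContinuousLinearMap.id ℝ _)) y :=
      (hasFDerivAt_const t y).prodMk (hasFDerivAt_id y)
    have h2 : HasFDerivAt (s t)
        ((L t y).comp ((0 : EuclideanSpace ℝ (Fin d) →L[ℝ] ℝ).prod (ContinuousLinearMap.id ℝ _))) y :=
      (hdiff (t, y)).hasFDerivAt.comp y h1
    have h3 : HasGradientAt (s t) (gradient (s t) y) y :=
      h2.differentiableAt.hasGradientAt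
    have h4 := h3.hasFDerivAt.unique h2
    calc (inner ℝ (gradient (s t) y) v : ℝ)
        = (InnerProductSpace.toDual ℝ (EuclideanSpace ℝ (Fin d)) (gradient (s t) y)) v := by
          simp [InnerProductSpace.toDual_apply_apply, real_inner_comm]
      _ = L t y (0, v) := by rw [h4]; rfl
  -- derivative of g t = s t (x t)
  have hgderiv : ∀ t ∈ Set.Icc t₀ t₁, HasDerivAt (fun t => s t (x t)) (L t (x t) (1, x' t)) t := by
    intro t htmem
    have h1 : HasDerivAt (fun τ : ℝ => (τ, x τ)) ((1 : ℝ), x' t) t :=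
      (hasDerivAt_id t).prodMk (hx t htmem)
    exact (hdiff (t, x t)).hasFDerivAt.comp_hasDerivAt t h1
  have hsub : Set.Icc t₀ t₁ ⊆ Set.Icc (0:ℝ) 1 := Set.Icc_subset_Icc ht₀ ht₁
  -- g' formula
  have hg'eq : ∀ t ∈ Set.Icc t₀ t₁,
      L t (x t) (1, x' t) = 1 / 2 * ‖gradient (s t) (x t)‖ ^ 2 - U (x t)
        + (inner ℝ (gradient (s t) (x t)) (x' t) : ℝ) := by
    intro t htmem
    have hsplit : ((1 : ℝ), x' t) = ((1 : ℝ), (0 : EuclideanSpace ℝ (Fin d))) + ((0 : ℝ), x' t) := by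
      simp
    have h5 : L t (x t) (1, x' t) = L t (x t) (1, 0) + L t (x t) (0, x' t) := by
      rw [hsplit]; exact (L t (x t)).map_add _ _
    rw [h5, ← hgrad, ← (hderiv_t t (x t)).deriv, hHJB t (hsub htmem) (x t)]
  -- continuity facts
  have hxcont : ContinuousOn x (Set.Icc t₀ t₁) :=
    fun t htmem => ((hx t htmem).continuousAt).continuousWithinAt
  have hfderiv_cont : Continuous (fun q : ℝ × EuclideanSpace ℝ (Fin d) => fderiv ℝ F q) :=
    hs.continuous_fderiv one_ne_zero
  have hg'cont : ContinuousOn (fun t => L t (x t) (1, x' t)) (Set.Icc t₀ t₁) := by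
    have h1 : ContinuousOn (fun t => fderiv ℝ F (t, x t)) (Set.Icc t₀ t₁) :=
      hfderiv_cont.comp_continuousOn (continuousOn_id.prodMk hxcont)
    exact h1.clm_apply (continuousOn_const.prodMk hx')
  have hfcont : ContinuousOn (fun t => 1 / 2 * ‖x' t‖ ^ 2 + U (x t)) (Set.Icc t₀ t₁) :=
    ((continuousOn_const.mul ((hx'.norm).pow 2))).add (hU.comp_continuousOn hxcont)
  have huIcc : Set.uIcc t₀ t₁ = Set.Icc t₀ t₁ := Set.uIcc_of_le ht
  have hg'int : IntervalIntegrable (fun t => L t (x t) (1, x' t)) volume t₀ t₁ :=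
    (hg'cont.mono (le_of_eq huIcc)).intervalIntegrable
  have hfint : IntervalIntegrable (fun t => 1 / 2 * ‖x' t‖ ^ 2 + U (x t)) volume t₀ t₁ :=
    (hfcont.mono (le_of_eq huIcc)).intervalIntegrable
  -- FTC
  have hFTC : ∫ t in t₀..t₁, L t (x t) (1, x' t) = s t₁ (x t₁) - s t₀ (x t₀) := by
    apply intervalIntegral.integral_eq_sub_of_hasDerivAt
    · intro t htmem
      exact hgderiv t (huIcc ▸ htmem)
    · exact hg'int
  -- pointwise nonneg
  have hptwise : ∀ t ∈ Set.Icc t₀ t₁,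
      0 ≤ (1 / 2 * ‖x' t‖ ^ 2 + U (x t)) + L t (x t) (1, x' t) := by
    intro t htmem
    rw [hg'eq t htmem]
    have hexp := @norm_add_sq_real (EuclideanSpace ℝ (Fin d)) _ _ (gradient (s t) (x t)) (x' t)
    nlinarith [sq_nonneg ‖gradient (s t) (x t) + x' t‖]
  have hsum : (0:ℝ) ≤ ∫ t in t₀..t₁, ((1 / 2 * ‖x' t‖ ^ 2 + U (x t)) + L t (x t) (1, x' t)) :=
    intervalIntegral.integral_nonneg ht hptwise
  rw [intervalIntegral.integral_add hfint hg'int, hFTC] at hsum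
  linarith
end

section
/- Let U : ℝ^d → ℝ be continuous, g : ℝ^d → ℝ, and let s : ℝ × ℝ^d → ℝ be continuously differentiable, solve the deterministic Hamilton–Jacobi–Bellman equation ∂_t s(t,x) = ½‖∇_x s(t,x)‖² − U(x) for all t ∈ [0,1] and x ∈ ℝ^d, and satisfy the boundary condition s(1, x) = −g(x) for all x ∈ ℝ^d. Fix x₀ ∈ ℝ^d and assume there exists a continuously differentiable path x* : [0,1] → ℝ^d with x*(0) = x₀ solving x*'(t) = −∇_x s(t, x*(t)) on [0,1]. Then the deterministic c-conjugate of g at x₀, defined as g^c(x₀) := inf over all continuously differentiable paths x : [0,1] → ℝ^d with x(0) = x₀ of [ ∫₀¹ ( ½‖x'(t)‖² + U(x(t)) ) dt − g(x(1)) ], equals s(0, x₀), and the infimum is attained by x*. -/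
open MeasureTheory

section Aux

open InnerProductSpace Set

variable {d : ℕ}

local notation "E" => EuclideanSpace ℝ (Fin d)
local notation "⟪" x ", " y "⟫" => @inner ℝ _ _ x y

/-- Key computation: for any admissible path, the cost equals
`∫ ½‖x' + ∇s‖² + s 0 x₀`. -/
theorem cost_eq_aux
    (U : EuclideanSpace ℝ (Fin d) → ℝ) (hU : Continuous U)
    (g : EuclideanSpace ℝ (Fin d) → ℝ)
    (s : ℝ → EuclideanSpace ℝ (Fin d) → ℝ)
    (hs : ContDiff ℝ 1 (fun q : ℝ × EuclideanSpace ℝ (Fin d) => s q.1 q.2))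
    (hHJB : ∀ t ∈ Set.Icc (0 : ℝ) 1, ∀ x : EuclideanSpace ℝ (Fin d),
      deriv (fun τ => s τ x) t = 1 / 2 * ‖gradient (s t) x‖ ^ 2 - U x)
    (hbd : ∀ x : EuclideanSpace ℝ (Fin d), s 1 x = -g x)
    (x₀ : EuclideanSpace ℝ (Fin d))
    (x x' : ℝ → EuclideanSpace ℝ (Fin d))
    (hx0 : x 0 = x₀)
    (hx : ∀ t ∈ Set.Icc (0 : ℝ) 1, HasDerivAt x (x' t) t)
    (hx' : ContinuousOn x' (Set.Icc (0 : ℝ) 1)) :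
    (∫ t in (0 : ℝ)..1, (1 / 2 * ‖x' t‖ ^ 2 + U (x t))) - g (x 1)
      = (∫ t in (0 : ℝ)..1, 1 / 2 * ‖x' t + gradient (s t) (x t)‖ ^ 2) + s 0 x₀ := by
  set F : ℝ × E → ℝ := fun q => s q.1 q.2 with hF
  have hFd : Differentiable ℝ F := hs.differentiable one_ne_zero
  -- the gradient as a jointly continuous function
  set G : ℝ × E → E := fun q =>
    (toDual ℝ E).symm ((fderiv ℝ F q).comp (ContinuousLinearMap.inr ℝ ℝ E)) with hGdef
  have hGcont : Continuous G :=
    ((toDual ℝ E).symm.continuous).comp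
      ((hs.continuous_fderiv one_ne_zero).clm_comp continuous_const)
  have hst : ∀ t y, HasFDerivAt (s t)
      ((fderiv ℝ F (t, y)).comp (ContinuousLinearMap.inr ℝ ℝ E)) y := by
    intro t y
    have h1 : HasFDerivAt (fun z : E => ((t : ℝ), z))
        (ContinuousLinearMap.inr ℝ ℝ E) y :=
      HasFDerivAt.prodMk (hasFDerivAt_const t y) (hasFDerivAt_id y)
    exact ((hFd (t, y)).hasFDerivAt).comp y h1
  have hGgrad : ∀ t y, G (t, y) = gradient (s t) y := by
    intro t y
    rw [gradient, (hst t y).fderiv]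
  have hGinner : ∀ t y v, ⟪G (t, y), v⟫ = fderiv ℝ F (t, y) (0, v) := by
    intro t y v
    simp [hGdef, toDual_symm_apply]
  -- time partial derivative
  have hTime : ∀ t y, HasDerivAt (fun τ => s τ y) (fderiv ℝ F (t, y) (1, 0)) t := by
    intro t y
    have h1 : HasDerivAt (fun τ : ℝ => ((τ : ℝ), y)) ((1 : ℝ), (0 : E)) t :=
      HasDerivAt.prodMk (hasDerivAt_id t) (hasDerivAt_const t y)
    exact ((hFd (t, y)).hasFDerivAt).comp_hasDerivAt t h1
  -- derivative of t ↦ s t (x t)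
  set φ : ℝ → ℝ := fun t => s t (x t) with hφdef
  set φ' : ℝ → ℝ := fun t =>
    (1 / 2 * ‖G (t, x t)‖ ^ 2 - U (x t)) + ⟪G (t, x t), x' t⟫ with hφ'def
  have hxcont : ContinuousOn x (Set.Icc (0 : ℝ) 1) := fun t ht =>
    (hx t ht).continuousAt.continuousWithinAt
  have hφderiv : ∀ t ∈ Set.Icc (0 : ℝ) 1, HasDerivAt φ (φ' t) t := by
    intro t ht
    have h1 : HasDerivAt (fun τ : ℝ => ((τ : ℝ), x τ)) ((1 : ℝ), x' t) t :=
      HasDerivAt.prodMk (hasDerivAt_id t) (hx t ht)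
    have h2 : HasDerivAt φ (fderiv ℝ F (t, x t) (1, x' t)) t := by
      have h := ((hFd (t, x t)).hasFDerivAt).comp_hasDerivAt t h1
      exact h
    have h3 : fderiv ℝ F (t, x t) (1, x' t) = φ' t := by
      have hsplit : ((1 : ℝ), x' t) = ((1 : ℝ), (0 : E)) + ((0 : ℝ), x' t) := by
        simp
      rw [hsplit, map_add]
      have hA : fderiv ℝ F (t, x t) (1, 0)
          = 1 / 2 * ‖G (t, x t)‖ ^ 2 - U (x t) := by
        rw [← (hTime t (x t)).deriv, hHJB t ht (x t), hGgrad]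
      rw [hA, ← hGinner]
    rwa [h3] at h2
  -- continuity of all integrands on [0,1]
  have hGx : ContinuousOn (fun t => G (t, x t)) (Set.Icc (0 : ℝ) 1) :=
    hGcont.comp_continuousOn (continuousOn_id.prodMk hxcont)
  have hφ'cont : ContinuousOn φ' (Set.Icc (0 : ℝ) 1) := by
    apply ContinuousOn.add
    · exact ((continuousOn_const.mul ((hGx.norm).pow 2)).sub
        (hU.comp_continuousOn hxcont))
    · exact hGx.inner hx'
  have huIcc : Set.uIcc (0 : ℝ) 1 = Set.Icc (0 : ℝ) 1 := Set.uIcc_of_le zero_le_one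
  have hφ'int : IntervalIntegrable φ' volume 0 1 := by
    apply ContinuousOn.intervalIntegrable
    rwa [huIcc]
  have hcostcont : ContinuousOn (fun t => 1 / 2 * ‖x' t‖ ^ 2 + U (x t))
      (Set.Icc (0 : ℝ) 1) :=
    (continuousOn_const.mul ((hx'.norm).pow 2)).add (hU.comp_continuousOn hxcont)
  have hcostint : IntervalIntegrable (fun t => 1 / 2 * ‖x' t‖ ^ 2 + U (x t))
      volume 0 1 := by
    apply ContinuousOn.intervalIntegrable
    rwa [huIcc]
  have hψcont : ContinuousOn (fun t => 1 / 2 * ‖x' t + gradient (s t) (x t)‖ ^ 2)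
      (Set.Icc (0 : ℝ) 1) := by
    have : ContinuousOn (fun t => x' t + gradient (s t) (x t)) (Set.Icc (0 : ℝ) 1) := by
      have := hx'.add hGx
      refine this.congr fun t _ => ?_
      simp only [Pi.add_apply, hGgrad]
    exact continuousOn_const.mul ((this.norm).pow 2)
  have hψint : IntervalIntegrable (fun t => 1 / 2 * ‖x' t + gradient (s t) (x t)‖ ^ 2)
      volume 0 1 := by
    apply ContinuousOn.intervalIntegrable
    rwa [huIcc]
  -- fundamental theorem of calculus
  have hFTC : ∫ t in (0 : ℝ)..1, φ' t = φ 1 - φ 0 := by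
    apply intervalIntegral.integral_eq_sub_of_hasDerivAt
    · intro t ht
      exact hφderiv t (huIcc ▸ ht)
    · exact hφ'int
  have hφ1 : φ 1 = -g (x 1) := hbd (x 1)
  have hφ0 : φ 0 = s 0 x₀ := by rw [hφdef]; simp [hx0]
  -- pointwise identity
  have hpt : ∀ t ∈ Set.Icc (0 : ℝ) 1,
      1 / 2 * ‖x' t‖ ^ 2 + U (x t)
        = 1 / 2 * ‖x' t + gradient (s t) (x t)‖ ^ 2 - φ' t := by
    intro t ht
    have hnorm : ‖x' t + gradient (s t) (x t)‖ ^ 2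
        = ‖x' t‖ ^ 2 + 2 * ⟪x' t, gradient (s t) (x t)⟫ + ‖gradient (s t) (x t)‖ ^ 2 :=
      norm_add_sq_real _ _
    have hc : ⟪gradient (s t) (x t), x' t⟫ = ⟪x' t, gradient (s t) (x t)⟫ :=
      real_inner_comm _ _
    rw [hφ'def]
    simp only [hGgrad]
    rw [hnorm, hc]
    ring
  have hintegral : ∫ t in (0 : ℝ)..1, (1 / 2 * ‖x' t‖ ^ 2 + U (x t))
      = (∫ t in (0 : ℝ)..1, 1 / 2 * ‖x' t + gradient (s t) (x t)‖ ^ 2)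
        - ∫ t in (0 : ℝ)..1, φ' t := by
    rw [← intervalIntegral.integral_sub hψint hφ'int]
    apply intervalIntegral.integral_congr
    intro t ht
    exact hpt t (huIcc ▸ ht)
  rw [hintegral, hFTC, hφ1, hφ0]
  ring

end Aux

/-- The deterministic `c`-conjugate potential equals the HJB value function at time `0`:
if `s` is `C¹`, solves the deterministic HJB equation on `[0,1] × ℝ^d`, satisfies the
boundary condition `s(1,x) = −g(x)`, and a gradient-flow path `x*` starting at `x₀`
exists on `[0,1]`, then
`g^c(x₀) = inf over C¹ paths x with x(0)=x₀ of [∫₀¹(½‖x'‖² + U(x)) dt − g(x(1))]`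
equals `s(0, x₀)`, and the infimum is attained by `x*`. -/
theorem c_conjugate_eq_value_function
    (d : ℕ) (hd : 1 ≤ d)
    (U : EuclideanSpace ℝ (Fin d) → ℝ) (hU : Continuous U)
    (g : EuclideanSpace ℝ (Fin d) → ℝ)
    (s : ℝ → EuclideanSpace ℝ (Fin d) → ℝ)
    (hs : ContDiff ℝ 1 (fun q : ℝ × EuclideanSpace ℝ (Fin d) => s q.1 q.2))
    (hHJB : ∀ t ∈ Set.Icc (0 : ℝ) 1, ∀ x : EuclideanSpace ℝ (Fin d),
      deriv (fun τ => s τ x) t = 1 / 2 * ‖gradient (s t) x‖ ^ 2 - U x)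
    (hbd : ∀ x : EuclideanSpace ℝ (Fin d), s 1 x = -g x)
    (x₀ : EuclideanSpace ℝ (Fin d))
    (xstar : ℝ → EuclideanSpace ℝ (Fin d))
    (hxstar₀ : xstar 0 = x₀)
    (hxstar : ∀ t ∈ Set.Icc (0 : ℝ) 1,
      HasDerivAt xstar (-gradient (s t) (xstar t)) t) :
    ((∫ t in (0 : ℝ)..1, (1 / 2 * ‖gradient (s t) (xstar t)‖ ^ 2 + U (xstar t)))
        - g (xstar 1) = s 0 x₀) ∧
    IsLeast
      {r : ℝ | ∃ x x' : ℝ → EuclideanSpace ℝ (Fin d),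
        x 0 = x₀ ∧
        (∀ t ∈ Set.Icc (0 : ℝ) 1, HasDerivAt x (x' t) t) ∧
        ContinuousOn x' (Set.Icc (0 : ℝ) 1) ∧
        r = (∫ t in (0 : ℝ)..1, (1 / 2 * ‖x' t‖ ^ 2 + U (x t))) - g (x 1)}
      (s 0 x₀) := by
  classical
  set xd : ℝ → EuclideanSpace ℝ (Fin d) := fun t => -gradient (s t) (xstar t) with hxd
  have hxdcont : ContinuousOn xd (Set.Icc (0 : ℝ) 1) := by
    set F : ℝ × EuclideanSpace ℝ (Fin d) → ℝ := fun q => s q.1 q.2 with hF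
    have hFd : Differentiable ℝ F := hs.differentiable one_ne_zero
    have hGcont : Continuous fun q : ℝ × EuclideanSpace ℝ (Fin d) =>
        (InnerProductSpace.toDual ℝ (EuclideanSpace ℝ (Fin d))).symm
          ((fderiv ℝ F q).comp (ContinuousLinearMap.inr ℝ ℝ (EuclideanSpace ℝ (Fin d)))) :=
      ((InnerProductSpace.toDual ℝ (EuclideanSpace ℝ (Fin d))).symm.continuous).comp
        ((hs.continuous_fderiv one_ne_zero).clm_comp continuous_const)
    have hxcont : ContinuousOn xstar (Set.Icc (0 : ℝ) 1) := fun t ht =>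
      (hxstar t ht).continuousAt.continuousWithinAt
    have hgr : ∀ t, gradient (s t) (xstar t)
        = (InnerProductSpace.toDual ℝ (EuclideanSpace ℝ (Fin d))).symm
            ((fderiv ℝ F (t, xstar t)).comp
              (ContinuousLinearMap.inr ℝ ℝ (EuclideanSpace ℝ (Fin d)))) := by
      intro t
      have h1 : HasFDerivAt (fun z : EuclideanSpace ℝ (Fin d) => ((t : ℝ), z))
          (ContinuousLinearMap.inr ℝ ℝ (EuclideanSpace ℝ (Fin d))) (xstar t) :=
        HasFDerivAt.prodMk (hasFDerivAt_const t (xstar t)) (hasFDerivAt_id (xstar t))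
      have h2 : HasFDerivAt (s t)
          ((fderiv ℝ F (t, xstar t)).comp
            (ContinuousLinearMap.inr ℝ ℝ (EuclideanSpace ℝ (Fin d)))) (xstar t) :=
        ((hFd (t, xstar t)).hasFDerivAt).comp (xstar t) h1
      rw [gradient, h2.fderiv]
    have : ContinuousOn (fun t => gradient (s t) (xstar t)) (Set.Icc (0 : ℝ) 1) := by
      have := hGcont.comp_continuousOn (continuousOn_id.prodMk hxcont)
      refine this.congr fun t _ => hgr t
    exact this.neg
  have hxderiv : ∀ t ∈ Set.Icc (0 : ℝ) 1, HasDerivAt xstar (xd t) t := fun t ht =>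
    hxstar t ht
  have hkey := cost_eq_aux U hU g s hs hHJB hbd x₀ xstar xd hxstar₀ hxderiv hxdcont
  have hzero : (∫ t in (0 : ℝ)..1, 1 / 2 * ‖xd t + gradient (s t) (xstar t)‖ ^ 2) = 0 := by
    have : ∀ t, 1 / 2 * ‖xd t + gradient (s t) (xstar t)‖ ^ 2 = 0 := by
      intro t; simp [hxd]
    simp only [this, intervalIntegral.integral_zero]
  have hcost : (∫ t in (0 : ℝ)..1, (1 / 2 * ‖xd t‖ ^ 2 + U (xstar t))) - g (xstar 1)
      = s 0 x₀ := by
    rw [hkey, hzero, zero_add]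
  have hnormeq : ∀ t, ‖xd t‖ = ‖gradient (s t) (xstar t)‖ := fun t => by
    simp [hxd]
  constructor
  · have : (∫ t in (0 : ℝ)..1, (1 / 2 * ‖gradient (s t) (xstar t)‖ ^ 2 + U (xstar t)))
        = ∫ t in (0 : ℝ)..1, (1 / 2 * ‖xd t‖ ^ 2 + U (xstar t)) := by
      congr 1
      funext t
      rw [hnormeq]
    rw [this]
    exact hcost
  constructor
  · exact ⟨xstar, xd, hxstar₀, hxderiv, hxdcont, hcost.symm⟩
  · rintro r ⟨x, x', hx0, hx, hx', hr⟩
    have hk := cost_eq_aux U hU g s hs hHJB hbd x₀ x x' hx0 hx hx'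
    have hnonneg : 0 ≤ ∫ t in (0 : ℝ)..1, 1 / 2 * ‖x' t + gradient (s t) (x t)‖ ^ 2 := by
      apply intervalIntegral.integral_nonneg zero_le_one
      intro t _
      positivity
    rw [hr, hk]
    linarith
end

section
/- Let α and β be Borel probability measures on ℝ^d, U : ℝ^d → ℝ continuous, and s : ℝ × ℝ^d → ℝ continuously differentiable solving the deterministic Hamilton–Jacobi–Bellman equation ∂_t s(t,x) = ½‖∇_x s(t,x)‖² − U(x) for all t ∈ [0,1] and x ∈ ℝ^d. Let Φ : ℝ × ℝ^d → ℝ^d be measurable with t ↦ Φ(t, ω) continuously differentiable on [0,1] for each ω, Φ(0, ω) = ω for all ω, and the pushforward of α under ω ↦ Φ(1, ω) equal to β. Assume ω ↦ ∫₀¹ ( ½‖∂_t Φ(t, ω)‖² + U(Φ(t, ω)) ) dt, ω ↦ s(0, ω), and y ↦ s(1, y) are integrable with respect to α, α, and β respectively. Then the total transport cost satisfies ∫_{ℝ^d} [ ∫₀¹ ( ½‖∂_t Φ(t, ω)‖² + U(Φ(t, ω)) ) dt ] dα(ω) ≥ ∫_{ℝ^d} s(0, ω) dα(ω) − ∫_{ℝ^d}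 s(1, y) dβ(y). -/
set_option maxHeartbeats 1000000

open MeasureTheory

/-- Weak duality (lower bound) of the dual GSB problem, noise-free case: if `s` is `C¹`
and solves the deterministic HJB equation on `[0,1] × ℝ^d`, and `Φ` is a measurable flow
with `C¹` time-slices, `Φ(0,ω) = ω`, and `(Φ(1,·))_# α = β`, then, under the stated
integrability assumptions, the total transport cost satisfies
`∫ [∫₀¹ (½‖∂_t Φ(t,ω)‖² + U(Φ(t,ω))) dt] dα(ω) ≥ ∫ s(0,ω) dα(ω) − ∫ s(1,y) dβ(y)`. -/
theorem gsb_weak_duality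
    (d : ℕ) (hd : 1 ≤ d)
    (α β : Measure (EuclideanSpace ℝ (Fin d)))
    [IsProbabilityMeasure α] [IsProbabilityMeasure β]
    (U : EuclideanSpace ℝ (Fin d) → ℝ) (hU : Continuous U)
    (s : ℝ → EuclideanSpace ℝ (Fin d) → ℝ)
    (hs : ContDiff ℝ 1 (fun q : ℝ × EuclideanSpace ℝ (Fin d) => s q.1 q.2))
    (hHJB : ∀ t ∈ Set.Icc (0 : ℝ) 1, ∀ x : EuclideanSpace ℝ (Fin d),
      deriv (fun τ => s τ x) t = 1 / 2 * ‖gradient (s t) x‖ ^ 2 - U x)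
    (Φ Φ' : ℝ → EuclideanSpace ℝ (Fin d) → EuclideanSpace ℝ (Fin d))
    (hΦmeas : Measurable (fun q : ℝ × EuclideanSpace ℝ (Fin d) => Φ q.1 q.2))
    (hΦderiv : ∀ ω : EuclideanSpace ℝ (Fin d), ∀ t ∈ Set.Icc (0 : ℝ) 1,
      HasDerivAt (fun τ => Φ τ ω) (Φ' t ω) t)
    (hΦ'cont : ∀ ω : EuclideanSpace ℝ (Fin d),
      ContinuousOn (fun t => Φ' t ω) (Set.Icc (0 : ℝ) 1))
    (hΦ₀ : ∀ ω : EuclideanSpace ℝ (Fin d), Φ 0 ω = ω)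
    (hpush : Measure.map (fun ω => Φ 1 ω) α = β)
    (hcost_int : Integrable
      (fun ω => ∫ t in (0 : ℝ)..1, (1 / 2 * ‖Φ' t ω‖ ^ 2 + U (Φ t ω))) α)
    (hs0_int : Integrable (fun ω => s 0 ω) α)
    (hs1_int : Integrable (fun y => s 1 y) β) :
    (∫ ω, (∫ t in (0 : ℝ)..1, (1 / 2 * ‖Φ' t ω‖ ^ 2 + U (Φ t ω))) ∂α) ≥
      (∫ ω, s 0 ω ∂α) - ∫ y, s 1 y ∂β := by
  classical
  set F : ℝ × EuclideanSpace ℝ (Fin d) → ℝ := fun q => s q.1 q.2 with hF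
  have hFdiff : Differentiable ℝ F := hs.differentiable one_ne_zero
  have hFc : Continuous (fun p => fderiv ℝ F p) := hs.continuous_fderiv one_ne_zero
  have huIcc : Set.uIcc (0 : ℝ) 1 = Set.Icc 0 1 := Set.uIcc_of_le (by norm_num)
  -- pointwise (in ω) inequality
  have key : ∀ ω : EuclideanSpace ℝ (Fin d),
      (∫ t in (0 : ℝ)..1, (1 / 2 * ‖Φ' t ω‖ ^ 2 + U (Φ t ω)))
        ≥ s 0 ω - s 1 (Φ 1 ω) := by
    intro ω
    set g' : ℝ → ℝ := fun t => fderiv ℝ F (t, Φ t ω) (1, Φ' t ω) with hg'def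
    have hγcont : ContinuousOn (fun t => Φ t ω) (Set.Icc 0 1) := fun t ht =>
      (hΦderiv ω t ht).continuousAt.continuousWithinAt
    have hg : ∀ t ∈ Set.uIcc (0 : ℝ) 1,
        HasDerivAt (fun τ => s τ (Φ τ ω)) (g' t) t := by
      intro t ht
      rw [huIcc] at ht
      have hpair : HasDerivAt
          (fun τ => ((τ, Φ τ ω) : ℝ × EuclideanSpace ℝ (Fin d))) (1, Φ' t ω) t :=
        (hasDerivAt_id t).prodMk (hΦderiv ω t ht)
      exact (hFdiff (t, Φ t ω)).hasFDerivAt.comp_hasDerivAt t hpair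
    have hg'cont : ContinuousOn g' (Set.Icc 0 1) := by
      have h1 : ContinuousOn (fun t => fderiv ℝ F (t, Φ t ω)) (Set.Icc 0 1) :=
        hFc.comp_continuousOn (continuousOn_id.prodMk hγcont)
      have h2 : ContinuousOn (fun t => ((1 : ℝ), Φ' t ω)) (Set.Icc 0 1) :=
        continuousOn_const.prodMk (hΦ'cont ω)
      exact h1.clm_apply h2
    have hg'int : IntervalIntegrable g' volume 0 1 := by
      apply ContinuousOn.intervalIntegrable
      rwa [huIcc]
    have hcostcont : ContinuousOn
        (fun t => 1 / 2 * ‖Φ' t ω‖ ^ 2 + U (Φ t ω)) (Set.Icc 0 1) :=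
      (continuousOn_const.mul ((hΦ'cont ω).norm.pow 2)).add
        (hU.comp_continuousOn hγcont)
    have hcostint : IntervalIntegrable
        (fun t => 1 / 2 * ‖Φ' t ω‖ ^ 2 + U (Φ t ω)) volume 0 1 := by
      apply ContinuousOn.intervalIntegrable
      rwa [huIcc]
    -- FTC
    have hFTC : (∫ t in (0 : ℝ)..1, g' t)
        = s 1 (Φ 1 ω) - s 0 (Φ 0 ω) :=
      intervalIntegral.integral_eq_sub_of_hasDerivAt hg hg'int
    -- pointwise inequality in t
    have hpt : ∀ t ∈ Set.Icc (0 : ℝ) 1,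
        -g' t ≤ 1 / 2 * ‖Φ' t ω‖ ^ 2 + U (Φ t ω) := by
      intro t ht
      set x := Φ t ω with hx
      set v := Φ' t ω with hv
      set D := fderiv ℝ F (t, x) with hD
      -- time partial derivative
      have hpair0 : HasDerivAt
          (fun τ => ((τ, x) : ℝ × EuclideanSpace ℝ (Fin d))) (1, 0) t :=
        (hasDerivAt_id t).prodMk (hasDerivAt_const t x)
      have h1 : HasDerivAt (fun τ => s τ x) (D (1, 0)) t :=
        by have := (hFdiff (t, x)).hasFDerivAt.comp_hasDerivAt t hpair0; exact this
      have hDt : D (1, 0) = 1 / 2 * ‖gradient (s t) x‖ ^ 2 - U x := by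
        rw [← h1.deriv]; exact hHJB t ht x
      -- space partial derivative
      have hinr : HasFDerivAt
          (fun y : EuclideanSpace ℝ (Fin d) => ((t, y) : ℝ × EuclideanSpace ℝ (Fin d)))
          (ContinuousLinearMap.inr ℝ ℝ (EuclideanSpace ℝ (Fin d))) x :=
        hasFDerivAt_prodMk_right t x
      have h2 : HasFDerivAt (s t)
          (D.comp (ContinuousLinearMap.inr ℝ ℝ (EuclideanSpace ℝ (Fin d)))) x :=
        (hFdiff (t, x)).hasFDerivAt.comp x hinr
      have hgrad : HasGradientAt (s t) (gradient (s t) x) x :=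
        h2.differentiableAt.hasGradientAt
      have heq : D.comp (ContinuousLinearMap.inr ℝ ℝ (EuclideanSpace ℝ (Fin d)))
          = InnerProductSpace.toDual ℝ (EuclideanSpace ℝ (Fin d)) (gradient (s t) x) :=
        h2.unique hgrad.hasFDerivAt
      have hDx : D (0, v) = inner ℝ (gradient (s t) x) v := by
        have := congrFun (congrArg DFunLike.coe heq) v
        simpa using this
      have hsplit : g' t = D (1, 0) + D (0, v) := by
        have h3 : ((1 : ℝ), v) = ((1 : ℝ), (0 : EuclideanSpace ℝ (Fin d))) + ((0 : ℝ), v) := by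
          simp
        rw [hg'def]
        simp only [← hx, ← hv, ← hD, h3, map_add]
      set G := gradient (s t) x
      have hip : |inner ℝ G v| ≤ ‖G‖ * ‖v‖ := abs_real_inner_le_norm G v
      have hip' : -(‖G‖ * ‖v‖) ≤ (inner ℝ G v : ℝ) := neg_le_of_abs_le hip
      rw [hsplit, hDt, hDx]
      nlinarith [sq_nonneg (‖G‖ - ‖v‖), sq_nonneg ‖G‖, sq_nonneg ‖v‖]
    -- combine
    have hmono : (∫ t in (0 : ℝ)..1, -g' t)
        ≤ ∫ t in (0 : ℝ)..1, (1 / 2 * ‖Φ' t ω‖ ^ 2 + U (Φ t ω)) :=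
      intervalIntegral.integral_mono_on (by norm_num) hg'int.neg hcostint hpt
    have hneg : (∫ t in (0 : ℝ)..1, -g' t) = s 0 ω - s 1 (Φ 1 ω) := by
      rw [intervalIntegral.integral_neg, hFTC, hΦ₀ ω]; ring
    rw [hneg] at hmono
    exact hmono
  -- integrate over α
  have hΦ1meas : Measurable (fun ω : EuclideanSpace ℝ (Fin d) => Φ 1 ω) :=
    hΦmeas.comp (measurable_const.prodMk measurable_id)
  have hs1cont : Continuous (s 1) := by
    have : Continuous fun x : EuclideanSpace ℝ (Fin d) => F (1, x) :=
      hs.continuous.comp (continuous_const.prodMk continuous_id)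
    exact this
  have hcomp : Integrable (fun ω => s 1 (Φ 1 ω)) α := by
    rw [← hpush] at hs1_int
    exact (integrable_map_measure hs1cont.aestronglyMeasurable
      hΦ1meas.aemeasurable).mp hs1_int
  have hmono : (∫ ω, (s 0 ω - s 1 (Φ 1 ω)) ∂α)
      ≤ ∫ ω, (∫ t in (0 : ℝ)..1, (1 / 2 * ‖Φ' t ω‖ ^ 2 + U (Φ t ω))) ∂α :=
    integral_mono (hs0_int.sub hcomp) hcost_int (fun ω => key ω)
  have hsub : (∫ ω, (s 0 ω - s 1 (Φ 1 ω)) ∂α)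
      = (∫ ω, s 0 ω ∂α) - ∫ ω, s 1 (Φ 1 ω) ∂α :=
    integral_sub hs0_int hcomp
  have hmap : (∫ y, s 1 y ∂β) = ∫ ω, s 1 (Φ 1 ω) ∂α := by
    rw [← hpush]
    exact integral_map hΦ1meas.aemeasurable hs1cont.aestronglyMeasurable
  rw [ge_iff_le, hmap, ← hsub]
  exact hmono
end

section
/- Let α and β be Borel probability measures on ℝ^d, U : ℝ^d → ℝ continuous, and s : ℝ × ℝ^d → ℝ continuously differentiable solving the deterministic Hamilton–Jacobi–Bellman equation ∂_t s(t,x) = ½‖∇_x s(t,x)‖² − U(x) for all t ∈ [0,1] and x ∈ ℝ^d. Let Φ* : ℝ × ℝ^d → ℝ^d be measurable with t ↦ Φ*(t, ω) continuously differentiable on [0,1] for each ω, Φ*(0, ω) = ω, ∂_t Φ*(t, ω) = −∇_x s(t, Φ*(t, ω)) for all t ∈ [0,1] and ω, and the pushforward of α under ω ↦ Φ*(1, ω) equal to β. Assume ω ↦ s(0, ω) is α-integrable and y ↦ s(1, y) is β-integrable. Then: (i) the total cost of the gradient flow equals the dual value, ∫ [ ∫₀¹ ( ½‖∂_t Φ*(t,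 ω)‖² + U(Φ*(t, ω)) ) dt ] dα(ω) = ∫ s(0, ω) dα(ω) − ∫ s(1, y) dβ(y); and (ii) for every measurable Φ : ℝ × ℝ^d → ℝ^d with t ↦ Φ(t, ω) continuously differentiable on [0,1] for each ω, Φ(0, ω) = ω, pushforward of α under ω ↦ Φ(1, ω) equal to β, and α-integrable total cost, the total cost of Φ is at least the total cost of Φ*. -/
open MeasureTheory InnerProductSpace Set

variable {d : ℕ}

local notation "E" => EuclideanSpace ℝ (Fin d)

/-- gradient of s t at x, expressed via the full fderiv. -/
lemma grad_eq (s : ℝ → E → ℝ)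
    (hs : ContDiff ℝ 1 (fun q : ℝ × E => s q.1 q.2)) (t : ℝ) (x : E) :
    HasGradientAt (s t)
      ((toDual ℝ E).symm
        ((fderiv ℝ (fun q : ℝ × E => s q.1 q.2) (t, x)).comp
          (ContinuousLinearMap.inr ℝ ℝ E))) x := by
  have hFd : DifferentiableAt ℝ (fun q : ℝ × E => s q.1 q.2) (t, x) :=
    (hs.differentiable one_ne_zero) _
  have hmk : HasFDerivAt (fun y : E => ((t, y) : ℝ × E))
      (ContinuousLinearMap.inr ℝ ℝ E) x := hasFDerivAt_prodMk_right t x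
  have := (hFd.hasFDerivAt.comp x hmk)
  exact this.hasGradientAt

lemma grad_cont (s : ℝ → E → ℝ)
    (hs : ContDiff ℝ 1 (fun q : ℝ × E => s q.1 q.2))
    (φ : ℝ → E) (hφ : ContinuousOn φ (Icc (0:ℝ) 1)) :
    ContinuousOn (fun t => gradient (s t) (φ t)) (Icc (0:ℝ) 1) := by
  have hfc : Continuous (fderiv ℝ (fun q : ℝ × E => s q.1 q.2)) :=
    hs.continuous_fderiv one_ne_zero
  have h1 : ContinuousOn
      (fun t => ((fderiv ℝ (fun q : ℝ × E => s q.1 q.2) (t, φ t)).comp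
        (ContinuousLinearMap.inr ℝ ℝ E))) (Icc (0:ℝ) 1) :=
    (hfc.comp_continuousOn (continuousOn_id.prodMk hφ)).clm_comp continuousOn_const
  have h2 := ((toDual ℝ E).symm.continuous.comp_continuousOn h1)
  refine h2.congr fun t ht => ?_
  exact ((grad_eq s hs t (φ t)).gradient)

lemma key_flow_eq (U : E → ℝ) (hU : Continuous U)
    (s : ℝ → E → ℝ)
    (hs : ContDiff ℝ 1 (fun q : ℝ × E => s q.1 q.2))
    (hHJB : ∀ t ∈ Icc (0 : ℝ) 1, ∀ x : E,
      deriv (fun τ => s τ x) t = 1 / 2 * ‖gradient (s t) x‖ ^ 2 - U x)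
    (φ φ' : ℝ → E)
    (hφ : ∀ t ∈ Icc (0:ℝ) 1, HasDerivAt φ (φ' t) t)
    (hφ' : ContinuousOn φ' (Icc (0:ℝ) 1)) :
    ∫ t in (0:ℝ)..1, (1/2 * ‖φ' t‖^2 + U (φ t)) =
      (∫ t in (0:ℝ)..1, 1/2 * ‖φ' t + gradient (s t) (φ t)‖^2)
        + (s 0 (φ 0) - s 1 (φ 1)) := by
  set F : ℝ × E → ℝ := fun q => s q.1 q.2 with hF
  set G : ℝ → E := fun t => gradient (s t) (φ t) with hG
  have hφc : ContinuousOn φ (Icc (0:ℝ) 1) := fun t ht =>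
    ((hφ t ht).continuousAt).continuousWithinAt
  have hGc : ContinuousOn G (Icc (0:ℝ) 1) := grad_cont s hs φ hφc
  -- inner product formula
  have hinner : ∀ t v, ⟪G t, v⟫_ℝ = fderiv ℝ F (t, φ t) (0, v) := by
    intro t v
    have h := (grad_eq s hs t (φ t)).gradient
    show ⟪gradient (s t) (φ t), v⟫_ℝ = _
    rw [h, toDual_symm_apply]
    rfl
  -- time partial
  have htime : ∀ t (x : E), deriv (fun τ => s τ x) t = fderiv ℝ F (t, x) (1, 0) := by
    intro t x
    have hc : HasDerivAt (fun τ : ℝ => ((τ, x) : ℝ × E)) (1, 0) t :=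
      HasDerivAt.prodMk (hasDerivAt_id t) (hasDerivAt_const t x)
    have hFd : HasFDerivAt F (fderiv ℝ F (t, x)) (t, x) :=
      ((hs.differentiable one_ne_zero) _).hasFDerivAt
    exact (hFd.comp_hasDerivAt t hc).deriv
  -- derivative of t ↦ s t (φ t)
  set D : ℝ → ℝ := fun t => 1/2 * ‖G t‖^2 - U (φ t) + ⟪G t, φ' t⟫_ℝ with hD
  have hg : ∀ t ∈ Icc (0:ℝ) 1, HasDerivAt (fun τ => s τ (φ τ)) (D t) t := by
    intro t ht
    have hc : HasDerivAt (fun τ : ℝ => ((τ, φ τ) : ℝ × E)) (1, φ' t) t :=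
      HasDerivAt.prodMk (hasDerivAt_id t) (hφ t ht)
    have hFd : HasFDerivAt F (fderiv ℝ F (t, φ t)) (t, φ t) :=
      ((hs.differentiable one_ne_zero) _).hasFDerivAt
    have h1 : HasDerivAt (fun τ => s τ (φ τ)) (fderiv ℝ F (t, φ t) (1, φ' t)) t :=
      by have := hFd.comp_hasDerivAt t hc; exact this
    have hdec : fderiv ℝ F (t, φ t) (1, φ' t)
        = fderiv ℝ F (t, φ t) (1, 0) + fderiv ℝ F (t, φ t) (0, φ' t) := by
      rw [← ContinuousLinearMap.map_add]
      norm_num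
    rw [hdec, ← htime t (φ t), ← hinner t (φ' t), hHJB t ht (φ t)] at h1
    exact h1
  -- integrability of D
  have huIcc : uIcc (0:ℝ) 1 = Icc (0:ℝ) 1 := uIcc_of_le (by norm_num)
  have hDc : ContinuousOn D (Icc (0:ℝ) 1) := by
    refine ContinuousOn.add (ContinuousOn.sub ?_ (hU.comp_continuousOn hφc)) ?_
    · exact (continuousOn_const.mul ((hGc.norm).pow 2))
    · exact hGc.inner hφ'
  have hDint : IntervalIntegrable D volume 0 1 := by
    apply ContinuousOn.intervalIntegrable; rwa [huIcc]
  have hFTC : ∫ t in (0:ℝ)..1, D t = s 1 (φ 1) - s 0 (φ 0) := by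
    refine intervalIntegral.integral_eq_sub_of_hasDerivAt
      (f := fun t => s t (φ t)) (fun t ht => ?_) hDint
    exact hg t (huIcc ▸ ht)
  -- pointwise identity
  have hpt : ∀ t, 1/2 * ‖φ' t‖^2 + U (φ t) = 1/2 * ‖φ' t + G t‖^2 - D t := by
    intro t
    rw [hD, norm_add_sq_real, real_inner_comm (G t) (φ' t)]
    ring
  have hSqc : ContinuousOn (fun t => 1/2 * ‖φ' t + G t‖^2) (Icc (0:ℝ) 1) :=
    continuousOn_const.mul (((hφ'.add hGc).norm).pow 2)
  have hSqint : IntervalIntegrable (fun t => 1/2 * ‖φ' t + G t‖^2) volume 0 1 := by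
    apply ContinuousOn.intervalIntegrable; rwa [huIcc]
  calc ∫ t in (0:ℝ)..1, (1/2 * ‖φ' t‖^2 + U (φ t))
      = ∫ t in (0:ℝ)..1, (1/2 * ‖φ' t + G t‖^2 - D t) := by
        simp only [hpt]
    _ = (∫ t in (0:ℝ)..1, 1/2 * ‖φ' t + G t‖^2) - ∫ t in (0:ℝ)..1, D t :=
        intervalIntegral.integral_sub hSqint hDint
    _ = (∫ t in (0:ℝ)..1, 1/2 * ‖φ' t + G t‖^2) + (s 0 (φ 0) - s 1 (φ 1)) := by
        rw [hFTC]; ring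

lemma star_cost (U : E → ℝ) (hU : Continuous U)
    (s : ℝ → E → ℝ)
    (hs : ContDiff ℝ 1 (fun q : ℝ × E => s q.1 q.2))
    (hHJB : ∀ t ∈ Icc (0 : ℝ) 1, ∀ x : E,
      deriv (fun τ => s τ x) t = 1 / 2 * ‖gradient (s t) x‖ ^ 2 - U x)
    (φ : ℝ → E)
    (hφ : ∀ t ∈ Icc (0:ℝ) 1, HasDerivAt φ (-gradient (s t) (φ t)) t) :
    ∫ t in (0:ℝ)..1, (1/2 * ‖gradient (s t) (φ t)‖^2 + U (φ t)) =
      s 0 (φ 0) - s 1 (φ 1) := by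
  have hφc : ContinuousOn φ (Icc (0:ℝ) 1) := fun t ht =>
    ((hφ t ht).continuousAt).continuousWithinAt
  have hφ' : ContinuousOn (fun t => -gradient (s t) (φ t)) (Icc (0:ℝ) 1) :=
    (grad_cont s hs φ hφc).neg
  have h := key_flow_eq U hU s hs hHJB φ (fun t => -gradient (s t) (φ t)) hφ hφ'
  simp only [norm_neg, neg_add_cancel, norm_zero] at h
  rw [h]
  simp



lemma flow_lower_bound (U : E → ℝ) (hU : Continuous U)
    (s : ℝ → E → ℝ)
    (hs : ContDiff ℝ 1 (fun q : ℝ × E => s q.1 q.2))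
    (hHJB : ∀ t ∈ Icc (0 : ℝ) 1, ∀ x : E,
      deriv (fun τ => s τ x) t = 1 / 2 * ‖gradient (s t) x‖ ^ 2 - U x)
    (φ φ' : ℝ → E)
    (hφ : ∀ t ∈ Icc (0:ℝ) 1, HasDerivAt φ (φ' t) t)
    (hφ' : ContinuousOn φ' (Icc (0:ℝ) 1)) :
    s 0 (φ 0) - s 1 (φ 1) ≤ ∫ t in (0:ℝ)..1, (1/2 * ‖φ' t‖^2 + U (φ t)) := by
  rw [key_flow_eq U hU s hs hHJB φ φ' hφ hφ']
  have h0 : (0:ℝ) ≤ ∫ t in (0:ℝ)..1, 1/2 * ‖φ' t + gradient (s t) (φ t)‖^2 :=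
    intervalIntegral.integral_nonneg (by norm_num)
      (fun u _ => by positivity)
  linarith

/-- Optimality half of the dual GSB problem (Theorem 1), noise-free case: if `s` is `C¹`
and solves the deterministic HJB equation on `[0,1] × ℝ^d`, and `Φ*` is a measurable
gradient flow of `s` (`∂_t Φ*(t,ω) = −∇_x s(t, Φ*(t,ω))`) with `Φ*(0,ω) = ω` and
`(Φ*(1,·))_# α = β`, then (i) the total cost of `Φ*` equals the dual value
`∫ s(0,·) dα − ∫ s(1,·) dβ`, and (ii) every admissible flow `Φ` transporting `α` to `β`
with `α`-integrable total cost has total cost at least that of `Φ*`. -/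
theorem gsb_gradient_flow_optimality
    (d : ℕ) (hd : 1 ≤ d)
    (α β : Measure (EuclideanSpace ℝ (Fin d)))
    [IsProbabilityMeasure α] [IsProbabilityMeasure β]
    (U : EuclideanSpace ℝ (Fin d) → ℝ) (hU : Continuous U)
    (s : ℝ → EuclideanSpace ℝ (Fin d) → ℝ)
    (hs : ContDiff ℝ 1 (fun q : ℝ × EuclideanSpace ℝ (Fin d) => s q.1 q.2))
    (hHJB : ∀ t ∈ Set.Icc (0 : ℝ) 1, ∀ x : EuclideanSpace ℝ (Fin d),
      deriv (fun τ => s τ x) t = 1 / 2 * ‖gradient (s t) x‖ ^ 2 - U x)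
    (Φstar : ℝ → EuclideanSpace ℝ (Fin d) → EuclideanSpace ℝ (Fin d))
    (hΦstarmeas : Measurable (fun q : ℝ × EuclideanSpace ℝ (Fin d) => Φstar q.1 q.2))
    (hΦstarderiv : ∀ ω : EuclideanSpace ℝ (Fin d), ∀ t ∈ Set.Icc (0 : ℝ) 1,
      HasDerivAt (fun τ => Φstar τ ω) (-gradient (s t) (Φstar t ω)) t)
    (hΦstar₀ : ∀ ω : EuclideanSpace ℝ (Fin d), Φstar 0 ω = ω)
    (hstarpush : Measure.map (fun ω => Φstar 1 ω) α = β)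
    (hs0_int : Integrable (fun ω => s 0 ω) α)
    (hs1_int : Integrable (fun y => s 1 y) β) :
    ((∫ ω, (∫ t in (0 : ℝ)..1,
        (1 / 2 * ‖gradient (s t) (Φstar t ω)‖ ^ 2 + U (Φstar t ω))) ∂α) =
      (∫ ω, s 0 ω ∂α) - ∫ y, s 1 y ∂β) ∧
    (∀ (Φ Φ' : ℝ → EuclideanSpace ℝ (Fin d) → EuclideanSpace ℝ (Fin d)),
      Measurable (fun q : ℝ × EuclideanSpace ℝ (Fin d) => Φ q.1 q.2) →
      (∀ ω : EuclideanSpace ℝ (Fin d), ∀ t ∈ Set.Icc (0 : ℝ) 1,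
        HasDerivAt (fun τ => Φ τ ω) (Φ' t ω) t) →
      (∀ ω : EuclideanSpace ℝ (Fin d),
        ContinuousOn (fun t => Φ' t ω) (Set.Icc (0 : ℝ) 1)) →
      (∀ ω : EuclideanSpace ℝ (Fin d), Φ 0 ω = ω) →
      Measure.map (fun ω => Φ 1 ω) α = β →
      Integrable
        (fun ω => ∫ t in (0 : ℝ)..1, (1 / 2 * ‖Φ' t ω‖ ^ 2 + U (Φ t ω))) α →
      (∫ ω, (∫ t in (0 : ℝ)..1, (1 / 2 * ‖Φ' t ω‖ ^ 2 + U (Φ t ω))) ∂α) ≥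
        ∫ ω, (∫ t in (0 : ℝ)..1,
          (1 / 2 * ‖gradient (s t) (Φstar t ω)‖ ^ 2 + U (Φstar t ω))) ∂α) := by
  have hs1cont : Continuous (fun y : EuclideanSpace ℝ (Fin d) => s 1 y) :=
    hs.continuous.comp (continuous_const.prodMk continuous_id)
  -- the value of the Φ* cost, pointwise
  have hstarpt : ∀ ω, (∫ t in (0 : ℝ)..1,
      (1 / 2 * ‖gradient (s t) (Φstar t ω)‖ ^ 2 + U (Φstar t ω)))
        = s 0 ω - s 1 (Φstar 1 ω) := by
    intro ω
    have := star_cost U hU s hs hHJB (fun t => Φstar t ω) (hΦstarderiv ω)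
    rw [this, hΦstar₀ ω]
  -- transfer integrability / integral along the pushforward, for any map with pushforward β
  have key_push : ∀ Ψ : EuclideanSpace ℝ (Fin d) → EuclideanSpace ℝ (Fin d),
      Measurable Ψ → Measure.map Ψ α = β →
      Integrable (fun ω => s 1 (Ψ ω)) α ∧
        ∫ ω, s 1 (Ψ ω) ∂α = ∫ y, s 1 y ∂β := by
    intro Ψ hΨ hpush
    constructor
    · have := (integrable_map_measure hs1cont.aestronglyMeasurable
        hΨ.aemeasurable).mp (by rwa [hpush])
      exact this
    · rw [← hpush, integral_map hΨ.aemeasurable hs1cont.aestronglyMeasurable]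
  have hΨstar : Measurable (fun ω => Φstar 1 ω) :=
    hΦstarmeas.comp (measurable_const.prodMk measurable_id)
  obtain ⟨hint1, heq1⟩ := key_push _ hΨstar hstarpush
  have part1 : (∫ ω, (∫ t in (0 : ℝ)..1,
      (1 / 2 * ‖gradient (s t) (Φstar t ω)‖ ^ 2 + U (Φstar t ω))) ∂α)
        = (∫ ω, s 0 ω ∂α) - ∫ y, s 1 y ∂β := by
    calc (∫ ω, (∫ t in (0 : ℝ)..1,
        (1 / 2 * ‖gradient (s t) (Φstar t ω)‖ ^ 2 + U (Φstar t ω))) ∂α)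
        = ∫ ω, (s 0 ω - s 1 (Φstar 1 ω)) ∂α :=
          integral_congr_ae (Filter.Eventually.of_forall fun ω => hstarpt ω)
      _ = (∫ ω, s 0 ω ∂α) - ∫ ω, s 1 (Φstar 1 ω) ∂α := integral_sub hs0_int hint1
      _ = (∫ ω, s 0 ω ∂α) - ∫ y, s 1 y ∂β := by rw [heq1]
  refine ⟨part1, ?_⟩
  intro Φ Φ' hΦmeas hΦderiv hΦ'cont hΦ₀ hpush hcost_int
  have hΨ : Measurable (fun ω => Φ 1 ω) :=
    hΦmeas.comp (measurable_const.prodMk measurable_id)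
  obtain ⟨hint2, heq2⟩ := key_push _ hΨ hpush
  have hlb : ∀ ω, s 0 ω - s 1 (Φ 1 ω) ≤
      ∫ t in (0 : ℝ)..1, (1 / 2 * ‖Φ' t ω‖ ^ 2 + U (Φ t ω)) := by
    intro ω
    have := flow_lower_bound U hU s hs hHJB (fun t => Φ t ω) (fun t => Φ' t ω)
      (hΦderiv ω) (hΦ'cont ω)
    rwa [hΦ₀ ω] at this
  have hmono : ∫ ω, (s 0 ω - s 1 (Φ 1 ω)) ∂α ≤
      ∫ ω, (∫ t in (0 : ℝ)..1, (1 / 2 * ‖Φ' t ω‖ ^ 2 + U (Φ t ω))) ∂α :=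
    integral_mono (hs0_int.sub hint2) hcost_int hlb
  have : ∫ ω, (s 0 ω - s 1 (Φ 1 ω)) ∂α = (∫ ω, s 0 ω ∂α) - ∫ y, s 1 y ∂β := by
    rw [integral_sub hs0_int hint2, heq2]
  rw [ge_iff_le, part1, ← this]
  exact hmono
end
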